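/- Let {A_1, …, A_m} be a polyphase GCA set of size s_1×⋯×s_r and {B_1, …, B_n} a polyphase GCA set of size t_1×⋯×t_r. Define C_{ij} = A_i⊗B_j for 1 ≤ i ≤ m and 1 ≤ j ≤ n. Then the collection {C_{ij} : 1 ≤ i ≤ m, 1 ≤ j ≤ n} of m·n arrays is a polyphase GCA set of size s_1t_1×⋯×s_rt_r. -/

import Mathlib

open scoped BigOperators

/-- An `r`-dimensional complex array, as a complex-valued function on ℤ^r. -/
abbrev Arr (r : ℕ) := (Fin r → ℤ) → ℂ

/-- Index tuple `i` lies in the box `[0, s₁) × ⋯ × [0, s_r)`. -/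
def InBox {r : ℕ} (s : Fin r → ℕ) (i : Fin r → ℤ) : Prop :=
  ∀ k, 0 ≤ i k ∧ i k < (s k : ℤ)

/-- The array vanishes outside the box of size `s`. -/
def SupportedOn {r : ℕ} (s : Fin r → ℕ) (A : Arr r) : Prop :=
  ∀ i, ¬ InBox s i → A i = 0

/-- Aperiodic autocorrelation of an array. -/
noncomputable def autocorr {r : ℕ} (A : Arr r) (δ : Fin r → ℤ) : ℂ :=
  ∑ᶠ i : Fin r → ℤ, A i * (starRingEnd ℂ) (A (i - δ))

/-- Weight of an array: the sum of squared moduli of its entries. -/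
noncomputable def weight {r : ℕ} (A : Arr r) : ℝ :=
  ∑ᶠ i : Fin r → ℤ, ‖A i‖ ^ 2

/-- Flipped-and-conjugated array `A*`, relative to size `s`. -/
noncomputable def flipConj {r : ℕ} (s : Fin r → ℕ) (A : Arr r) : Arr r :=
  fun i => (starRingEnd ℂ) (A fun k => (s k : ℤ) - 1 - i k)

/-- Kronecker product of arrays, where `t` is the size of `B`:
`(A ⊗ B)[i·t + j] = A[i]·B[j]`. -/
noncomputable def kron {r : ℕ} (t : Fin r → ℕ) (A B : Arr r) : Arr r :=
  fun i => A (fun k => i k / (t k : ℤ)) * B (fun k => i k % (t k : ℤ))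

/-- Concatenation of `X` (of extent `u` in dimension `i0`) and `Y` in dimension `i0`. -/
noncomputable def concat {r : ℕ} (i0 : Fin r) (u : ℕ) (X Y : Arr r) : Arr r :=
  fun v => if v i0 < (u : ℤ) then X v else Y (Function.update v i0 (v i0 - u))

/-- A polyphase array of size `s`: supported on the box and all in-box entries
are `N`-th roots of unity for some `N`. -/
def IsPolyphase {r : ℕ} (s : Fin r → ℕ) (A : Arr r) : Prop :=
  SupportedOn s A ∧ ∃ N : ℕ, 0 < N ∧ ∀ i, InBox s i → A i ^ N = 1

/-- A binary array of size `s`: all in-box entries are ±1, zero outside. -/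
def IsBinary {r : ℕ} (s : Fin r → ℕ) (A : Arr r) : Prop :=
  SupportedOn s A ∧ ∀ i, InBox s i → A i = 1 ∨ A i = -1

/-- Entries are zero or of modulus one, supported on the box of size `s`. -/
def IsUnimodZero {r : ℕ} (s : Fin r → ℕ) (A : Arr r) : Prop :=
  SupportedOn s A ∧ ∀ i, InBox s i → A i = 0 ∨ ‖A i‖ = 1

/-- Golay complementarity of a pair: `R_A + R_B = (w(A)+w(B))·Δ`. -/
def ComplementaryPair {r : ℕ} (A B : Arr r) : Prop :=
  ∀ δ : Fin r → ℤ, autocorr A δ + autocorr B δ =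
    if δ = 0 then ((weight A + weight B : ℝ) : ℂ) else 0

/-- Golay complementarity of a quad: `R_A + R_B + R_C + R_D = (Σ w)·Δ`. -/
def ComplementaryQuad {r : ℕ} (A B C D : Arr r) : Prop :=
  ∀ δ : Fin r → ℤ, autocorr A δ + autocorr B δ + autocorr C δ + autocorr D δ =
    if δ = 0 then ((weight A + weight B + weight C + weight D : ℝ) : ℂ) else 0

namespace Stmt12
variable {r : ℕ}

-- (assume these proved in other parts)
lemma idiv_small {T b : ℤ} (h0 : 0 ≤ b) (h1 : b < T) : b / T = 0 :=
  Int.ediv_eq_zero_of_lt h0 h1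
lemma idiv_neg_small {T b : ℤ} (hT : 0 < T) (h0 : -T ≤ b) (h1 : b < 0) : b / T = -1 := by
  have h2 : (b + T * 1) / T = b / T + 1 := Int.add_mul_ediv_left b 1 (ne_of_gt hT)
  have h3 : (b + T * 1) / T = 0 := Int.ediv_eq_zero_of_lt (by omega) (by omega)
  omega
lemma imod_small {b T : ℤ} (h0 : 0 ≤ b) (h1 : b < T) : b % T = b :=
  Int.emod_eq_of_lt h0 h1
lemma imod_neg_small {T b : ℤ} (hT : 0 < T) (h0 : -T ≤ b) (h1 : b < 0) : b % T = b + T := by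
  have := Int.emod_def b T
  rw [idiv_neg_small hT h0 h1] at this
  omega
lemma decomp_div {T q b : ℤ} (hT : 0 < T) : (T * q + b) / T = b / T + q := by
  rw [add_comm, mul_comm]
  exact Int.add_mul_ediv_right b q (ne_of_gt hT)
lemma decomp_mod {T q b : ℤ} (hT : 0 < T) : (T * q + b) % T = b % T := by
  have h := Int.emod_def (T * q + b) T
  rw [decomp_div hT] at h
  have h2 := Int.emod_def b T
  ring_nf at h h2 ⊢
  omega

noncomputable def box (s : Fin r → ℕ) : Finset (Fin r → ℤ) :=
  Fintype.piFinset fun k => Finset.Ico 0 (s k : ℤ)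
lemma mem_box {s : Fin r → ℕ} {i : Fin r → ℤ} : i ∈ box s ↔ InBox s i := by
  simp [box, InBox, Fintype.mem_piFinset, Finset.mem_Ico]
lemma ne_zero_inbox {s : Fin r → ℕ} {A : Arr r} (hA : SupportedOn s A) {i : Fin r → ℤ}
    (h : A i ≠ 0) : InBox s i := by
  by_contra hc; exact h (hA i hc)
lemma autocorr_eq_sum {s : Fin r → ℕ} {A : Arr r} (hA : SupportedOn s A) (δ : Fin r → ℤ) :
    autocorr A δ = ∑ i ∈ box s, A i * (starRingEnd ℂ) (A (i - δ)) := by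
  apply finsum_eq_finset_sum_of_support_subset
  intro i hi
  simp only [Function.mem_support] at hi
  have : A i ≠ 0 := fun h => hi (by simp [h])
  simpa [mem_box] using ne_zero_inbox hA this
lemma inbox_mul {s t : Fin r → ℕ} {i : Fin r → ℤ}
    (hq : InBox s (fun k => i k / (t k : ℤ))) (hm : InBox t (fun k => i k % (t k : ℤ))) :
    InBox (fun k => s k * t k) i := by
  intro k
  have hq' := hq k
  have hm' := hm k
  simp only at hq' hm'
  have ht : 0 < (t k : ℤ) := lt_of_le_of_lt hm'.1 hm'.2
  have hdm : (t k : ℤ) * (i k / t k) + i k % t k = i k := Int.mul_ediv_add_emod _ _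
  push_cast
  exact ⟨by nlinarith [hq'.1, hm'.1], by nlinarith [hq'.2, hm'.2]⟩
lemma kron_supported {s t : Fin r → ℕ} {A B : Arr r}
    (hA : SupportedOn s A) (hB : SupportedOn t B) :
    SupportedOn (fun k => s k * t k) (kron t A B) := by
  intro i hi
  by_contra h
  have hA' : A (fun k => i k / (t k : ℤ)) ≠ 0 := fun h0 => h (by simp [kron, h0])
  have hB' : B (fun k => i k % (t k : ℤ)) ≠ 0 := fun h0 => h (by simp [kron, h0])
  exact hi (inbox_mul (ne_zero_inbox hA hA') (ne_zero_inbox hB hB'))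

lemma kron_autocorr {s t : Fin r → ℕ} {A B : Arr r}
    (hA : SupportedOn s A) (hB : SupportedOn t B) (ht : ∀ k, 0 < (t k : ℤ)) (δ : Fin r → ℤ) :
    autocorr (kron t A B) δ =
      ∑ c : Fin r → Bool,
        autocorr A (fun k => δ k / (t k : ℤ) + if c k then 1 else 0) *
        autocorr B (fun k => δ k % (t k : ℤ) - if c k then (t k : ℤ) else 0) := by
  classical
  set u : Fin r → ℤ := fun k => δ k / (t k : ℤ) with hu
  set v : Fin r → ℤ := fun k => δ k % (t k : ℤ) with hv
  have hvb : ∀ k, 0 ≤ v k ∧ v k < (t k : ℤ) := fun k =>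
    ⟨Int.emod_nonneg _ (ne_of_gt (ht k)), Int.emod_lt_of_pos _ (ht k)⟩
  have hδ : ∀ k, δ k = (t k : ℤ) * u k + v k := fun k => (Int.mul_ediv_add_emod _ _).symm
  set uc : (Fin r → Bool) → (Fin r → ℤ) := fun c k => u k + if c k then 1 else 0 with huc
  set vc : (Fin r → Bool) → (Fin r → ℤ) := fun c k => v k - if c k then (t k : ℤ) else 0 with hvc
  set F : (Fin r → ℤ) → ℂ := fun i => kron t A B i * (starRingEnd ℂ) (kron t A B (i - δ)) with hF
  set fib : (Fin r → Bool) → Finset (Fin r → ℤ) :=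
    fun c => (box t).filter (fun j => (fun k => decide (j k < v k)) = c) with hfib
  -- step 1
  have step1 : autocorr (kron t A B) δ = ∑ i ∈ box (fun k => s k * t k), F i :=
    autocorr_eq_sum (kron_supported hA hB) δ
  -- step 2 : reindex
  have step2 : ∑ i ∈ box (fun k => s k * t k), F i
      = ∑ p ∈ box s ×ˢ box t, F (fun k => (t k : ℤ) * p.1 k + p.2 k) := by
    refine Finset.sum_nbij'
      (i := fun i => ((fun k => i k / (t k : ℤ)), (fun k => i k % (t k : ℤ))))
      (j := fun p => fun k => (t k : ℤ) * p.1 k + p.2 k) ?_ ?_ ?_ ?_ ?_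
    · intro a ha
      rw [mem_box] at ha
      rw [Finset.mem_product, mem_box, mem_box]
      constructor
      · intro k
        have hk := ha k
        push_cast at hk
        refine ⟨Int.ediv_nonneg hk.1 (le_of_lt (ht k)), Int.ediv_lt_of_lt_mul (ht k) ?_⟩
        nlinarith [hk.2]
      · exact fun k => ⟨Int.emod_nonneg _ (ne_of_gt (ht k)), Int.emod_lt_of_pos _ (ht k)⟩
    · intro p hp
      rw [Finset.mem_product, mem_box, mem_box] at hp
      rw [mem_box]
      intro k
      have h1 := hp.1 k
      have h2 := hp.2 k
      push_cast
      exact ⟨by nlinarith [h1.1, h2.1, ht k], by nlinarith [h1.2, h2.2, ht k]⟩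
    · intro a _
      funext k
      exact Int.mul_ediv_add_emod _ _
    · intro p hp
      rw [Finset.mem_product, mem_box, mem_box] at hp
      have h2 := hp.2
      ext k
      · simp only
        rw [decomp_div (ht k), idiv_small (h2 k).1 (h2 k).2]
        ring
      · simp only
        rw [decomp_mod (ht k), imod_small (h2 k).1 (h2 k).2]
    · intro a _
      congr 1
      funext k
      exact (Int.mul_ediv_add_emod _ _).symm
  -- pointwise key computation
  have key : ∀ c : Fin r → Bool, ∀ q ∈ box s, ∀ j ∈ fib c,
      F (fun k => (t k : ℤ) * q k + j k) =
        (A q * (starRingEnd ℂ) (A (q - uc c))) * (B j * (starRingEnd ℂ) (B (j - vc c))) := by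
    intro c q hq j hj
    rw [hfib, Finset.mem_filter] at hj
    obtain ⟨hjt, hjc⟩ := hj
    rw [mem_box] at hjt
    have hcar : ∀ k, (j k < v k) ↔ c k = true := by
      intro k
      rw [← congrFun hjc k]
      simp
    have hdiv1 : (fun k => ((t k : ℤ) * q k + j k) / (t k : ℤ)) = q := by
      funext k
      rw [decomp_div (ht k), idiv_small (hjt k).1 (hjt k).2]; ring
    have hmod1 : (fun k => ((t k : ℤ) * q k + j k) % (t k : ℤ)) = j := by
      funext k
      rw [decomp_mod (ht k), imod_small (hjt k).1 (hjt k).2]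
    have hdiv2 : (fun k => (((t k : ℤ) * q k + j k) - δ k) / (t k : ℤ)) = q - uc c := by
      funext k
      have : (t k : ℤ) * q k + j k - δ k = (t k : ℤ) * (q k - u k) + (j k - v k) := by
        rw [hδ k]; ring
      rw [this, decomp_div (ht k)]
      by_cases hck : c k = true
      · have hlt : j k < v k := (hcar k).2 hck
        rw [idiv_neg_small (ht k) (by have h1 := (hjt k).1; have h2 := (hvb k).2; omega)
          (by omega)]
        simp [Pi.sub_apply, huc, hvc, hck]
        try ring
      · have hge : ¬ (j k < v k) := fun h => hck ((hcar k).1 h)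
        rw [idiv_small (by omega)
          (by have h1 := (hjt k).2; have h2 := (hvb k).1; omega)]
        simp [Pi.sub_apply, huc, hvc, hck]
        try ring
    have hmod2 : (fun k => (((t k : ℤ) * q k + j k) - δ k) % (t k : ℤ)) = j - vc c := by
      funext k
      have : (t k : ℤ) * q k + j k - δ k = (t k : ℤ) * (q k - u k) + (j k - v k) := by
        rw [hδ k]; ring
      rw [this, decomp_mod (ht k)]
      by_cases hck : c k = true
      · have hlt : j k < v k := (hcar k).2 hck
        rw [imod_neg_small (ht k) (by have h1 := (hjt k).1; have h2 := (hvb k).2; omega)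
          (by omega)]
        simp [Pi.sub_apply, huc, hvc, hck]
        try ring
      · have hge : ¬ (j k < v k) := fun h => hck ((hcar k).1 h)
        rw [imod_small (by omega)
          (by have h1 := (hjt k).2; have h2 := (hvb k).1; omega)]
        simp [Pi.sub_apply, huc, hvc, hck]
        try ring
    simp only [hF, kron]
    have hsub : (fun k => ((fun k => (t k : ℤ) * q k + j k) - δ) k / (t k : ℤ)) = q - uc c := hdiv2
    rw [hdiv1, hmod1]
    have e1 : ((fun k => (t k : ℤ) * q k + j k) - δ) = fun k => ((t k : ℤ) * q k + j k) - δ k := rfl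
    rw [e1]
    rw [hdiv2, hmod2]
    rw [map_mul]
    ring
  -- fiber sums give autocorr B
  have hBfib : ∀ c : Fin r → Bool,
      autocorr B (vc c) = ∑ j ∈ fib c, B j * (starRingEnd ℂ) (B (j - vc c)) := by
    intro c
    apply finsum_eq_finset_sum_of_support_subset
    intro j hj
    simp only [Function.mem_support] at hj
    have hBj : B j ≠ 0 := fun h => hj (by simp [h])
    have hBj' : B (j - vc c) ≠ 0 := fun h => hj (by simp [h])
    have h1 : InBox t j := ne_zero_inbox hB hBj
    have h2 : InBox t (j - vc c) := ne_zero_inbox hB hBj'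
    simp only [Finset.coe_filter, Set.mem_setOf_eq, hfib]
    refine ⟨mem_box.2 h1, ?_⟩
    funext k
    have h2k := h2 k
    simp only [Pi.sub_apply, hvc] at h2k
    by_cases hck : c k = true
    · simp only [hck, if_true] at h2k
      have : j k < v k := by have := (hvb k).2; omega
      simp [hck, this]
    · simp only [hck, if_false] at h2k
      have : ¬ (j k < v k) := by simp at h2k ⊢; omega
      simp [hck] at this ⊢
      omega
  -- assemble
  rw [step1, step2, Finset.sum_product]
  have step3 : ∀ q ∈ box s, (∑ j ∈ box t, F (fun k => (t k : ℤ) * q k + j k))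
      = ∑ c : Fin r → Bool, ∑ j ∈ fib c, F (fun k => (t k : ℤ) * q k + j k) := by
    intro q _
    exact (Finset.sum_fiberwise (box t) (fun j => fun k => decide (j k < v k)) _).symm
  rw [Finset.sum_congr rfl step3]
  rw [Finset.sum_comm]
  refine Finset.sum_congr rfl fun c _ => ?_
  have step4 : ∀ q ∈ box s, (∑ j ∈ fib c, F (fun k => (t k : ℤ) * q k + j k))
      = (A q * (starRingEnd ℂ) (A (q - uc c))) *
        (∑ j ∈ fib c, B j * (starRingEnd ℂ) (B (j - vc c))) := by
    intro q hq
    rw [Finset.mul_sum]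
    exact Finset.sum_congr rfl fun j hj => key c q hq j hj
  rw [Finset.sum_congr rfl step4, ← Finset.sum_mul]
  rw [← autocorr_eq_sum hA (uc c), ← hBfib c]

lemma weight_eq_sum {s : Fin r → ℕ} {A : Arr r} (hA : SupportedOn s A) :
    weight A = ∑ i ∈ box s, ‖A i‖ ^ 2 := by
  apply finsum_eq_finset_sum_of_support_subset
  intro i hi
  simp only [Function.mem_support] at hi
  have : A i ≠ 0 := fun h => hi (by simp [h])
  simpa [mem_box] using ne_zero_inbox hA this

lemma autocorr_zero {s : Fin r → ℕ} {A : Arr r} (hA : SupportedOn s A) :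
    autocorr A 0 = ((weight A : ℝ) : ℂ) := by
  have h1 : autocorr A 0 = ∑ i ∈ box s, ((‖A i‖ ^ 2 : ℝ) : ℂ) := by
    rw [autocorr_eq_sum hA]
    refine Finset.sum_congr rfl fun i _ => ?_
    simp only [Pi.zero_apply, sub_zero]
    rw [Complex.mul_conj']
    push_cast
    ring_nf
  rw [h1, weight_eq_sum hA]
  push_cast
  rfl

lemma inbox_div_mod {s t : Fin r → ℕ} {i : Fin r → ℤ}
    (h : InBox (fun k => s k * t k) i) :
    (∀ k, 0 < (t k : ℤ)) ∧ InBox s (fun k => i k / (t k : ℤ)) ∧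
      InBox t (fun k => i k % (t k : ℤ)) := by
  have ht : ∀ k, 0 < (t k : ℤ) := by
    intro k
    have hk := h k
    push_cast at hk
    nlinarith [hk.1, hk.2]
  refine ⟨ht, fun k => ?_, fun k => ?_⟩
  · have hk := h k
    push_cast at hk
    refine ⟨Int.ediv_nonneg hk.1 (le_of_lt (ht k)), Int.ediv_lt_of_lt_mul (ht k) ?_⟩
    nlinarith [hk.2]
  · exact ⟨Int.emod_nonneg _ (ne_of_gt (ht k)), Int.emod_lt_of_pos _ (ht k)⟩

end Stmt12

/-- from polyphase GCA sets {A₁,…,A_m} of size s and {B₁,…,B_n} of size t,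
the m·n Kronecker products C_{ij} = A_i ⊗ B_j form a polyphase GCA set of size
s₁t₁×⋯×s_r t_r. -/

theorem stmt12 {r m n : ℕ} (s t : Fin r → ℕ)
    (A : Fin m → Arr r) (B : Fin n → Arr r)
    (hA : ∀ i, IsPolyphase s (A i)) (hB : ∀ j, IsPolyphase t (B j))
    (hAcomp : ∀ δ : Fin r → ℤ, ∑ i, autocorr (A i) δ =
      if δ = 0 then ((∑ i, weight (A i) : ℝ) : ℂ) else 0)
    (hBcomp : ∀ δ : Fin r → ℤ, ∑ j, autocorr (B j) δ =
      if δ = 0 then ((∑ j, weight (B j) : ℝ) : ℂ) else 0)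
    (C : Fin m → Fin n → Arr r)
    (hC : ∀ i j, C i j = kron t (A i) (B j)) :
    (∀ i j, IsPolyphase (fun k => s k * t k) (C i j)) ∧
      ∀ δ : Fin r → ℤ, ∑ i, ∑ j, autocorr (C i j) δ =
        if δ = 0 then ((∑ i, ∑ j, weight (C i j) : ℝ) : ℂ) else 0 := by
  classical
  have hAsupp : ∀ i, SupportedOn s (A i) := fun i => (hA i).1
  have hBsupp : ∀ j, SupportedOn t (B j) := fun j => (hB j).1
  have hCsupp : ∀ i j, SupportedOn (fun k => s k * t k) (C i j) := by
    intro i j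
    rw [hC]
    exact Stmt12.kron_supported (hAsupp i) (hBsupp j)
  constructor
  · -- polyphase
    intro i j
    refine ⟨hCsupp i j, ?_⟩
    obtain ⟨NA, hNA, hNAroot⟩ := (hA i).2
    obtain ⟨NB, hNB, hNBroot⟩ := (hB j).2
    refine ⟨NA * NB, Nat.mul_pos hNA hNB, ?_⟩
    intro x hx
    obtain ⟨ht, hq, hm⟩ := Stmt12.inbox_div_mod hx
    rw [hC]
    show (A i (fun k => x k / (t k : ℤ)) * B j (fun k => x k % (t k : ℤ))) ^ (NA * NB) = 1
    rw [mul_pow, pow_mul, hNAroot _ hq, one_pow, one_mul, mul_comm NA NB, pow_mul,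
      hNBroot _ hm, one_pow]
  · -- complementarity
    intro δ
    by_cases hδ : δ = 0
    · subst hδ
      rw [if_pos rfl]
      have : ∀ i j, autocorr (C i j) 0 = ((weight (C i j) : ℝ) : ℂ) := fun i j =>
        Stmt12.autocorr_zero (hCsupp i j)
      simp only [this]
      push_cast
      rfl
    · rw [if_neg hδ]
      by_cases hT : ∀ k, 0 < (t k : ℤ)
      · -- main case
        have hform : ∀ i j, autocorr (C i j) δ =
            ∑ c : Fin r → Bool,
              autocorr (A i) (fun k => δ k / (t k : ℤ) + if c k then 1 else 0) *
              autocorr (B j) (fun k => δ k % (t k : ℤ) - if c k then (t k : ℤ) else 0) := by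
          intro i j
          rw [hC]
          exact Stmt12.kron_autocorr (hAsupp i) (hBsupp j) hT δ
        simp only [hform]
        have swap1 : ∀ i : Fin m,
            (∑ j, ∑ c : Fin r → Bool,
              autocorr (A i) (fun k => δ k / (t k : ℤ) + if c k then 1 else 0) *
              autocorr (B j) (fun k => δ k % (t k : ℤ) - if c k then (t k : ℤ) else 0))
          = ∑ c : Fin r → Bool,
              autocorr (A i) (fun k => δ k / (t k : ℤ) + if c k then 1 else 0) *
              ∑ j, autocorr (B j) (fun k => δ k % (t k : ℤ) - if c k then (t k : ℤ) else 0) := by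
          intro i
          rw [Finset.sum_comm]
          exact Finset.sum_congr rfl fun c _ => (Finset.mul_sum _ _ _).symm
        simp only [swap1]
        rw [Finset.sum_comm]
        refine Finset.sum_eq_zero fun c _ => ?_
        rw [← Finset.sum_mul, hAcomp, hBcomp]
        split_ifs with h1 h2
        · -- both zero: contradiction with δ ≠ 0
          exfalso
          apply hδ
          funext k
          have hv : δ k % (t k : ℤ) = if c k then (t k : ℤ) else 0 := by
            have := congrFun h2 k
            simp only [Pi.zero_apply] at this
            omega
          have hck : c k = false := by
            by_contra h
            have hck' : c k = true := by
              cases hc : c k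
              · exact absurd hc h
              · rfl
            rw [hck', if_pos rfl] at hv
            have := Int.emod_lt_of_pos (δ k) (hT k)
            omega
          rw [hck] at hv
          simp only [Bool.false_eq_true, if_false] at hv
          have hu : δ k / (t k : ℤ) = 0 := by
            have := congrFun h1 k
            simp only [Pi.zero_apply, hck, Bool.false_eq_true, if_false] at this
            omega
          have := Int.mul_ediv_add_emod (δ k) (t k : ℤ)
          rw [hu, hv] at this
          simpa using this.symm
        all_goals simp
      · -- some t k = 0
        push_neg at hT
        obtain ⟨k0, hk0⟩ := hT
        have hk0' : (t k0 : ℤ) = 0 := le_antisymm hk0 (Int.ofNat_nonneg _)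
        have hBz : ∀ j y, B j y = 0 := by
          intro j y
          apply hBsupp j
          intro hy
          have := hy k0
          omega
        have hCz : ∀ i j x, C i j x = 0 := by
          intro i j x
          rw [hC]
          show A i _ * B j _ = 0
          rw [hBz]
          exact mul_zero _
        have : ∀ i j, autocorr (C i j) δ = 0 := by
          intro i j
          unfold autocorr
          simp [hCz]
        simp [this]
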